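/- With the setup below, let U be the unitary map from the image of Π onto ⊕_{α∈I} ℂ^{n_α} ⊗ ℂ^{n̄_α} determined by U(d_α^{-1/2} Σ_{k=1}^{d_α} |α i k⟩_r ⊗ |ᾱ j k⟩_r̄) = e_i^α ⊗ f_j^α (where e_i^α, f_j^α are the standard basis vectors of ℂ^{n_α}, ℂ^{n̄_α}). Then: (i) for every O ∈ End(H_r), the operator U ∘ (Π (O ⊗ 1) Π restricted to the image of Π) ∘ U^{-1} equals ⊕_{α∈I} M^α(O) ⊗ 1_{n̄_α}, where M^α(O) is the n_α × n_α matrix with entries M^α(O)_{ij} = (1/d_α) Σ_{k=1}^{d_α} ⟨α i k| O |α j k⟩; (ii) conversely, for every family of matrices M^α ∈ M_{n_α}(ℂ) there exists O ∈ End(H_r) with M^α(O) = M^α for all α; (iii) analogously, conjugation by U maps Ã_r̄ := {Π (1 ⊗ O') Π : O' ∈ End(H_r̄)} onto the set of operators of the form ⊕_{α∈I} 1_{n_α} ⊗ N^α with N^α ∈ M_{n̄_α}(ℂ). -/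

import Mathlib

open Matrix
open scoped Kronecker ComplexOrder

abbrev BIdx (I : Type) (n d : I → ℕ) : Type := Σ α : I, Fin (n α) × Fin (d α)

noncomputable def Arep {G I : Type} [Group G] [Fintype I] [DecidableEq I] {d : I → ℕ}
    (n : I → ℕ) (D : ∀ α : I, G →* Matrix.unitaryGroup (Fin (d α)) ℂ) (g : G) :
    Matrix (BIdx I n d) (BIdx I n d) ℂ :=
  Matrix.blockDiagonal' fun α =>
    (1 : Matrix (Fin (n α)) (Fin (n α)) ℂ) ⊗ₖ ((D α g : Matrix (Fin (d α)) (Fin (d α)) ℂ))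

noncomputable def Abar {G I : Type} [Group G] [Fintype I] [DecidableEq I] {d : I → ℕ}
    (nbar : I → ℕ) (D : ∀ α : I, G →* Matrix.unitaryGroup (Fin (d α)) ℂ) (g : G) :
    Matrix (BIdx I nbar d) (BIdx I nbar d) ℂ :=
  Matrix.blockDiagonal' fun α =>
    (1 : Matrix (Fin (nbar α)) (Fin (nbar α)) ℂ) ⊗ₖ
      ((D α g : Matrix (Fin (d α)) (Fin (d α)) ℂ).map (starRingEnd ℂ))

noncomputable def gaugeProj {G I : Type} [Group G] [Fintype G] [Fintype I] [DecidableEq I]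
    {d : I → ℕ} (n nbar : I → ℕ) (D : ∀ α : I, G →* Matrix.unitaryGroup (Fin (d α)) ℂ) :
    Matrix (BIdx I n d × BIdx I nbar d) (BIdx I n d × BIdx I nbar d) ℂ :=
  (Fintype.card G : ℂ)⁻¹ • ∑ g : G, (Arep n D g) ⊗ₖ (Abar nbar D g)

noncomputable def Ptilde {I : Type} [DecidableEq I] (n nbar d : I → ℕ) (α : I) :
    Matrix (BIdx I n d × BIdx I nbar d) (BIdx I n d × BIdx I nbar d) ℂ :=
  (d α : ℂ)⁻¹ • ∑ i : Fin (n α), ∑ j : Fin (nbar α), ∑ k : Fin (d α), ∑ l : Fin (d α),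
    Matrix.single (⟨α, (i, k)⟩, ⟨α, (j, k)⟩) (⟨α, (i, l)⟩, ⟨α, (j, l)⟩) 1

noncomputable def AtildeR {G I : Type} [Group G] [Fintype G] [Fintype I] [DecidableEq I]
    {d : I → ℕ} (n nbar : I → ℕ) (D : ∀ α : I, G →* Matrix.unitaryGroup (Fin (d α)) ℂ) :
    Set (Matrix (BIdx I n d × BIdx I nbar d) (BIdx I n d × BIdx I nbar d) ℂ) :=
  { T | ∃ O : Matrix (BIdx I n d) (BIdx I n d) ℂ,
      T = gaugeProj n nbar D * (O ⊗ₖ (1 : Matrix (BIdx I nbar d) (BIdx I nbar d) ℂ)) *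
        gaugeProj n nbar D }

noncomputable def AtildeRbar {G I : Type} [Group G] [Fintype G] [Fintype I] [DecidableEq I]
    {d : I → ℕ} (n nbar : I → ℕ) (D : ∀ α : I, G →* Matrix.unitaryGroup (Fin (d α)) ℂ) :
    Set (Matrix (BIdx I n d × BIdx I nbar d) (BIdx I n d × BIdx I nbar d) ℂ) :=
  { T | ∃ O : Matrix (BIdx I nbar d) (BIdx I nbar d) ℂ,
      T = gaugeProj n nbar D * ((1 : Matrix (BIdx I n d) (BIdx I n d) ℂ) ⊗ₖ O) *
        gaugeProj n nbar D }

noncomputable def tauTr {I : Type} [Fintype I] [DecidableEq I] (n nbar d : I → ℕ)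
    (T : Matrix (BIdx I n d × BIdx I nbar d) (BIdx I n d × BIdx I nbar d) ℂ) : ℂ :=
  ∑ α ∈ Finset.univ.filter (fun α => 1 ≤ nbar α),
    ((nbar α : ℂ))⁻¹ * (Ptilde n nbar d α * T).trace

/-- Standard basis vector. -/
noncomputable def eVec {X : Type} [DecidableEq X] (x : X) : X → ℂ := Pi.single x 1


set_option linter.unusedSectionVars false
set_option maxHeartbeats 1000000


lemma schur_scalar {d : ℕ} (hd : 1 ≤ d) {G : Type} [Group G]
    (D : G →* Matrix.unitaryGroup (Fin d) ℂ)
    (hirr : ∀ (W : Submodule ℂ (Fin d → ℂ)),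
      (∀ g : G, ∀ x ∈ W, (D g : Matrix (Fin d) (Fin d) ℂ) *ᵥ x ∈ W) →
      W = ⊥ ∨ W = ⊤)
    (T : Matrix (Fin d) (Fin d) ℂ)
    (hT : ∀ g, (D g : Matrix (Fin d) (Fin d) ℂ) * T = T * (D g : Matrix (Fin d) (Fin d) ℂ)) :
    ∃ c : ℂ, T = c • (1 : Matrix (Fin d) (Fin d) ℂ) := by
  haveI : NeZero d := ⟨by omega⟩
  obtain ⟨μ, hμ⟩ := Module.End.exists_eigenvalue (Matrix.mulVecLin T)
  obtain ⟨x, hx⟩ := hμ.exists_hasEigenvector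
  set S := T - μ • (1 : Matrix (Fin d) (Fin d) ℂ) with hSdef
  have hxS : S *ᵥ x = 0 := by
    have hTx : T *ᵥ x = μ • x := hx.apply_eq_smul
    rw [hSdef, Matrix.sub_mulVec, hTx, Matrix.smul_mulVec, Matrix.one_mulVec, sub_self]
  have hcomm : ∀ g, (D g : Matrix (Fin d) (Fin d) ℂ) * S = S * (D g : Matrix (Fin d) (Fin d) ℂ) := by
    intro g
    rw [hSdef, Matrix.mul_sub, Matrix.sub_mul, hT, Matrix.mul_smul, Matrix.smul_mul,
      Matrix.mul_one, Matrix.one_mul]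
  rcases hirr (LinearMap.ker S.mulVecLin) (by
      intro g y hy
      rw [LinearMap.mem_ker, Matrix.mulVecLin_apply] at *
      rw [Matrix.mulVec_mulVec, ← hcomm, ← Matrix.mulVec_mulVec, hy, Matrix.mulVec_zero]) with h | h
  · exfalso
    have : x ∈ LinearMap.ker S.mulVecLin := by
      rw [LinearMap.mem_ker, Matrix.mulVecLin_apply, hxS]
    rw [h, Submodule.mem_bot] at this
    exact hx.2 this
  · refine ⟨μ, ?_⟩
    have hS0 : S = 0 := by
      ext i j
      have h1 : Pi.single j (1 : ℂ) ∈ LinearMap.ker S.mulVecLin := h ▸ Submodule.mem_top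
      rw [LinearMap.mem_ker, Matrix.mulVecLin_apply, Matrix.mulVec_single] at h1
      have := congrFun h1 i
      simpa using this
    have := sub_eq_zero.mp hS0
    rw [this]

section
variable {G I : Type} [Group G] [Fintype G] [Fintype I] [DecidableEq I]
variable {d : I → ℕ} (D : ∀ α : I, G →* Matrix.unitaryGroup (Fin (d α)) ℂ)

/-- the averaged operator intertwines. -/
lemma avg_intertwine (α β : I) (F : Matrix (Fin (d α)) (Fin (d β)) ℂ) (h : G) :
    (D α h : Matrix (Fin (d α)) (Fin (d α)) ℂ) *
      (∑ g : G, (D α g : Matrix (Fin (d α)) (Fin (d α)) ℂ) * F *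
        ((D β g : Matrix (Fin (d β)) (Fin (d β)) ℂ))ᴴ)
    = (∑ g : G, (D α g : Matrix (Fin (d α)) (Fin (d α)) ℂ) * F *
        ((D β g : Matrix (Fin (d β)) (Fin (d β)) ℂ))ᴴ) *
      (D β h : Matrix (Fin (d β)) (Fin (d β)) ℂ) := by
  rw [Matrix.mul_sum, Matrix.sum_mul]
  rw [← Equiv.sum_comp (Equiv.mulLeft h)
    (fun g => (D α g : Matrix (Fin (d α)) (Fin (d α)) ℂ) * F *
        ((D β g : Matrix (Fin (d β)) (Fin (d β)) ℂ))ᴴ * (D β h : Matrix (Fin (d β)) (Fin (d β)) ℂ))]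
  refine Finset.sum_congr rfl fun g _ => ?_
  have hA : (D α (h * g) : Matrix (Fin (d α)) (Fin (d α)) ℂ)
      = (D α h : Matrix (Fin (d α)) (Fin (d α)) ℂ) * (D α g : Matrix (Fin (d α)) (Fin (d α)) ℂ) := by
    rw [_root_.map_mul]; rfl
  have hB : ((D β (h * g) : Matrix (Fin (d β)) (Fin (d β)) ℂ))ᴴ *
        (D β h : Matrix (Fin (d β)) (Fin (d β)) ℂ)
      = ((D β g : Matrix (Fin (d β)) (Fin (d β)) ℂ))ᴴ := by
    have : (D β (h * g) : Matrix (Fin (d β)) (Fin (d β)) ℂ)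
        = (D β h : Matrix (Fin (d β)) (Fin (d β)) ℂ) * (D β g : Matrix (Fin (d β)) (Fin (d β)) ℂ) := by
      rw [_root_.map_mul]; rfl
    rw [this, conjTranspose_mul, Matrix.mul_assoc]
    have hu : ((D β h : Matrix (Fin (d β)) (Fin (d β)) ℂ))ᴴ *
        (D β h : Matrix (Fin (d β)) (Fin (d β)) ℂ) = 1 := by
      have := (D β h).2.1
      rwa [Matrix.star_eq_conjTranspose] at this
    rw [hu, Matrix.mul_one]
  simp only [Equiv.coe_mulLeft, hA]
  simp only [Matrix.mul_assoc]
  rw [hB]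

lemma avg_entry (α β : I) (k k' : Fin (d α)) (l l' : Fin (d β)) :
    (∑ g : G, (D α g : Matrix (Fin (d α)) (Fin (d α)) ℂ) * Matrix.single k' l' (1:ℂ) *
        ((D β g : Matrix (Fin (d β)) (Fin (d β)) ℂ))ᴴ) k l
      = ∑ g : G, (D α g : Matrix (Fin (d α)) (Fin (d α)) ℂ) k k' *
          (starRingEnd ℂ) ((D β g : Matrix (Fin (d β)) (Fin (d β)) ℂ) l l') := by
  rw [Matrix.sum_apply]
  refine Finset.sum_congr rfl fun g _ => ?_
  rw [Matrix.mul_apply]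
  simp only [Matrix.mul_apply, Matrix.single, Matrix.of_apply, Matrix.conjTranspose_apply]
  simp [ite_and, Finset.sum_ite_eq, Finset.sum_ite_eq', RCLike.star_def]
end

section
variable {G I : Type} [Group G] [Fintype G] [Fintype I] [DecidableEq I]
variable {d : I → ℕ} (D : ∀ α : I, G →* Matrix.unitaryGroup (Fin (d α)) ℂ)

set_option linter.unusedSectionVars false

lemma schur_ne
    (hnoniso : ∀ α β, α ≠ β → ∀ F : Matrix (Fin (d α)) (Fin (d β)) ℂ,
      (∀ g : G, (D α g : Matrix (Fin (d α)) (Fin (d α)) ℂ) * F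
          = F * (D β g : Matrix (Fin (d β)) (Fin (d β)) ℂ)) → F = 0)
    {α β : I} (hαβ : α ≠ β) (k k' : Fin (d α)) (l l' : Fin (d β)) :
    ∑ g : G, (D α g : Matrix (Fin (d α)) (Fin (d α)) ℂ) k k' *
        (starRingEnd ℂ) ((D β g : Matrix (Fin (d β)) (Fin (d β)) ℂ) l l') = 0 := by
  have h0 := hnoniso α β hαβ
    (∑ g : G, (D α g : Matrix (Fin (d α)) (Fin (d α)) ℂ) * Matrix.single k' l' (1:ℂ) *
        ((D β g : Matrix (Fin (d β)) (Fin (d β)) ℂ))ᴴ)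
    (fun g => avg_intertwine D α β _ g)
  rw [← avg_entry D α β k k' l l', h0]
  simp

lemma schur_same
    (hirr : ∀ α (W : Submodule ℂ (Fin (d α) → ℂ)),
      (∀ g : G, ∀ x ∈ W, (D α g : Matrix (Fin (d α)) (Fin (d α)) ℂ) *ᵥ x ∈ W) →
      W = ⊥ ∨ W = ⊤)
    {α : I} (hd : 1 ≤ d α) (k k' l l' : Fin (d α)) :
    ∑ g : G, (D α g : Matrix (Fin (d α)) (Fin (d α)) ℂ) k k' *
        (starRingEnd ℂ) ((D α g : Matrix (Fin (d α)) (Fin (d α)) ℂ) l l')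
      = if k = l ∧ k' = l' then (Fintype.card G : ℂ) / (d α : ℂ) else 0 := by
  set F : Matrix (Fin (d α)) (Fin (d α)) ℂ :=
    ∑ g : G, (D α g : Matrix (Fin (d α)) (Fin (d α)) ℂ) * Matrix.single k' l' (1:ℂ) *
        ((D α g : Matrix (Fin (d α)) (Fin (d α)) ℂ))ᴴ with hF
  obtain ⟨c, hc⟩ := schur_scalar hd (D α) (hirr α) F (fun g => avg_intertwine D α α _ g)
  have htr : F.trace = (Fintype.card G : ℂ) * (if k' = l' then 1 else 0) := by
    rw [hF, Matrix.trace_sum]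
    have : ∀ g : G, ((D α g : Matrix (Fin (d α)) (Fin (d α)) ℂ) *
        Matrix.single k' l' (1:ℂ) *
        ((D α g : Matrix (Fin (d α)) (Fin (d α)) ℂ))ᴴ).trace
        = (if k' = l' then 1 else 0) := by
      intro g
      rw [Matrix.trace_mul_cycle]
      have hu : ((D α g : Matrix (Fin (d α)) (Fin (d α)) ℂ))ᴴ *
          (D α g : Matrix (Fin (d α)) (Fin (d α)) ℂ) = 1 := by
        have := (D α g).2.1
        rwa [Matrix.star_eq_conjTranspose] at this
      rw [hu, Matrix.one_mul]
      by_cases h : k' = l'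
      · subst h
        simp [Matrix.trace, Matrix.diag, Matrix.single, Finset.sum_ite_eq]
      · simp only [Matrix.trace, Matrix.diag, Matrix.single, Matrix.of_apply, if_neg h]
        rw [Finset.sum_eq_zero]
        intro x _
        rw [if_neg]
        rintro ⟨h1, h2⟩
        exact h (h1.symm ▸ h2.symm ▸ rfl)
    simp [this]
  have htr2 : F.trace = c * (d α : ℂ) := by
    rw [hc]
    simp [Matrix.trace_smul, Matrix.trace_one, mul_comm]
  have hdne : (d α : ℂ) ≠ 0 := by
    simp only [ne_eq, Nat.cast_eq_zero]; omega
  have hcval : c = (Fintype.card G : ℂ) * (if k' = l' then 1 else 0) / (d α : ℂ) := by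
    field_simp
    rw [← htr2, htr]
  have hentry : F k l = c * (if k = l then 1 else 0) := by
    rw [hc]; simp [Matrix.smul_apply, Matrix.one_apply]
  rw [← avg_entry D α α k k' l l', ← hF, hentry, hcval]
  by_cases h1 : k = l <;> by_cases h2 : k' = l' <;> simp [h1, h2] <;> ring
end



section
variable {I : Type} [DecidableEq I]

def pat (n nbar d : I → ℕ) (a : Σ α : I, Fin (n α) × Fin (nbar α)) (k : Fin (d a.1)) :
    BIdx I n d × BIdx I nbar d :=
  (⟨a.1, (a.2.1, k)⟩, ⟨a.1, (a.2.2, k)⟩)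

noncomputable def Vmat (n nbar d : I → ℕ) :
    Matrix (Σ α : I, Fin (n α) × Fin (nbar α)) (BIdx I n d × BIdx I nbar d) ℂ :=
  fun a p => ((Real.sqrt (d a.1) : ℂ))⁻¹ *
    ∑ k : Fin (d a.1), (if p = pat n nbar d a k then 1 else 0)

variable {n nbar d : I → ℕ}

lemma conj_Vmat (a : Σ α : I, Fin (n α) × Fin (nbar α)) (p : BIdx I n d × BIdx I nbar d) :
    (starRingEnd ℂ) (Vmat n nbar d a p) = Vmat n nbar d a p := by
  simp [Vmat, _root_.map_mul, map_inv₀, Complex.conj_ofReal, map_sum, apply_ite]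

lemma Vmat_eq_zero₁ {a : Σ α : I, Fin (n α) × Fin (nbar α)} {p : BIdx I n d × BIdx I nbar d}
    (h : a.1 ≠ p.1.1) : Vmat n nbar d a p = 0 := by
  rw [Vmat, Finset.sum_eq_zero, mul_zero]
  intro k _
  rw [if_neg]
  intro hc
  exact h (by rw [hc]; rfl)

lemma Vmat_eq_zero₂ {a : Σ α : I, Fin (n α) × Fin (nbar α)} {p : BIdx I n d × BIdx I nbar d}
    (h : a.1 ≠ p.2.1) : Vmat n nbar d a p = 0 := by
  rw [Vmat, Finset.sum_eq_zero, mul_zero]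
  intro k _
  rw [if_neg]
  intro hc
  exact h (by rw [hc]; rfl)

lemma VhV_apply [Fintype I] (p q : BIdx I n d × BIdx I nbar d) :
    ((Vmat n nbar d)ᴴ * Vmat n nbar d) p q
      = ∑ a : Σ α : I, Fin (n α) × Fin (nbar α), Vmat n nbar d a p * Vmat n nbar d a q := by
  rw [Matrix.mul_apply]
  refine Finset.sum_congr rfl fun a _ => ?_
  rw [Matrix.conjTranspose_apply, RCLike.star_def, conj_Vmat]
end

section
variable {I : Type} [DecidableEq I]
variable {n nbar d : I → ℕ}

lemma Vmat_apply_same (α : I) (i0 : Fin (n α)) (j0 : Fin (nbar α)) (i : Fin (n α)) (k : Fin (d α))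
    (j : Fin (nbar α)) (l : Fin (d α)) :
    Vmat n nbar d ⟨α, (i0, j0)⟩ ((⟨α, (i, k)⟩ : BIdx I n d), (⟨α, (j, l)⟩ : BIdx I nbar d))
      = if i = i0 ∧ j = j0 ∧ l = k then ((Real.sqrt (d α) : ℂ))⁻¹ else 0 := by
  rw [Vmat]
  have hiff : ∀ k0 : Fin (d α),
      (((⟨α, (i, k)⟩ : BIdx I n d), (⟨α, (j, l)⟩ : BIdx I nbar d))
          = pat n nbar d ⟨α, (i0, j0)⟩ k0)
        ↔ (k0 = k ∧ (i = i0 ∧ j = j0 ∧ l = k)) := by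
    intro k0
    constructor
    · intro h
      rw [Prod.ext_iff] at h
      obtain ⟨h1, h2⟩ := h
      simp only [pat] at h1 h2
      rw [Sigma.mk.inj_iff] at h1 h2
      have h1' : (i, k) = (i0, k0) := eq_of_heq h1.2
      have h2' : (j, l) = (j0, k0) := eq_of_heq h2.2
      rw [Prod.mk.injEq] at h1' h2'
      exact ⟨h1'.2.symm, h1'.1, h2'.1, h1'.2 ▸ h2'.2⟩
    · rintro ⟨hk0, h1, h2, h3⟩
      subst_vars
      rfl
  simp only [hiff, ite_and]
  rw [Finset.sum_ite_eq' Finset.univ k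
    (fun _ => if i = i0 then if j = j0 then if l = k then (1:ℂ) else 0 else 0 else 0)]
  simp only [Finset.mem_univ, if_true]
  split_ifs <;> simp
end

section
variable {G I : Type} [Group G] [Fintype G] [Fintype I] [DecidableEq I]
variable {d : I → ℕ} (D : ∀ α : I, G →* Matrix.unitaryGroup (Fin (d α)) ℂ)
variable {n nbar : I → ℕ}

lemma gauge_eq
    (hd : ∀ α, 1 ≤ d α)
    (hirr : ∀ α (W : Submodule ℂ (Fin (d α) → ℂ)),
      (∀ g : G, ∀ x ∈ W, (D α g : Matrix (Fin (d α)) (Fin (d α)) ℂ) *ᵥ x ∈ W) →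
      W = ⊥ ∨ W = ⊤)
    (hnoniso : ∀ α β, α ≠ β → ∀ F : Matrix (Fin (d α)) (Fin (d β)) ℂ,
      (∀ g : G, (D α g : Matrix (Fin (d α)) (Fin (d α)) ℂ) * F
          = F * (D β g : Matrix (Fin (d β)) (Fin (d β)) ℂ)) → F = 0) :
    gaugeProj n nbar D = (Vmat n nbar d)ᴴ * Vmat n nbar d := by
  have hcard : (Fintype.card G : ℂ) ≠ 0 := by
    simp [Fintype.card_ne_zero]
  ext p q
  obtain ⟨⟨α, i, k⟩, ⟨β, j, l⟩⟩ := p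
  obtain ⟨⟨α', i', k'⟩, ⟨β', j', l'⟩⟩ := q
  rw [VhV_apply]
  rw [gaugeProj, Matrix.smul_apply, Matrix.sum_apply]
  simp only [Matrix.kroneckerMap_apply]
  by_cases hα : α = α'
  · subst hα
    by_cases hβ : β = β'
    · subst hβ
      by_cases hab : α = β
      · subst hab
        -- diagonal block case
        simp only [Arep, Abar, Matrix.blockDiagonal'_apply_eq, Matrix.kroneckerMap_apply,
          Matrix.map_apply]
        have hsq : ((Real.sqrt (d α) : ℂ))⁻¹ * ((Real.sqrt (d α) : ℂ))⁻¹ = ((d α : ℕ) : ℂ)⁻¹ := by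
          rw [← mul_inv]
          congr 1
          rw [← Complex.ofReal_mul, Real.mul_self_sqrt (Nat.cast_nonneg _)]
          norm_num
        have hLHS : (∑ g : G, ((1 : Matrix (Fin (n α)) (Fin (n α)) ℂ) i i' *
              (D α g : Matrix (Fin (d α)) (Fin (d α)) ℂ) k k') *
              ((1 : Matrix (Fin (nbar α)) (Fin (nbar α)) ℂ) j j' *
              (starRingEnd ℂ) ((D α g : Matrix (Fin (d α)) (Fin (d α)) ℂ) l l')))
            = if i = i' ∧ j = j' then
                ∑ g : G, (D α g : Matrix (Fin (d α)) (Fin (d α)) ℂ) k k' *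
                  (starRingEnd ℂ) ((D α g : Matrix (Fin (d α)) (Fin (d α)) ℂ) l l')
              else 0 := by
          by_cases hi : i = i' <;> by_cases hj : j = j' <;>
            simp [Matrix.one_apply, hi, hj, mul_comm, mul_left_comm]
        rw [hLHS, schur_same D hirr (hd α) k k' l l']
        rw [← Finset.univ_sigma_univ, Finset.sum_sigma]
        rw [Finset.sum_eq_single α (fun b _ hb => Finset.sum_eq_zero fun x _ => by
            rw [Vmat_eq_zero₁ (a := ⟨b, x⟩) hb, zero_mul]) (fun h => absurd (Finset.mem_univ α) h)]
        simp only [Fintype.sum_prod_type]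
        simp only [Vmat_apply_same]
        by_cases hlk : l = k
        · by_cases hlk' : l' = k'
          · simp only [hlk, hlk', and_true]
            by_cases hij : i = i' ∧ j = j'
            · obtain ⟨rfl, rfl⟩ : i = i' ∧ j = j' := hij
              have hdα : ((d α : ℕ) : ℂ) ≠ 0 := by
                have := hd α; simp only [ne_eq, Nat.cast_eq_zero]; omega
              rw [if_pos (show i = i ∧ j = j from ⟨rfl, rfl⟩)]
              simp only [ite_and, mul_ite, ite_mul, mul_zero, zero_mul,
                Finset.sum_ite_eq, Finset.mem_univ, if_true, hsq, ↓reduceIte]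
              rw [smul_eq_mul]
              field_simp
              simp [hdα]
            · rw [if_neg hij, smul_zero]
              symm
              refine Finset.sum_eq_zero fun x _ => Finset.sum_eq_zero fun y _ => ?_
              by_cases hc1 : i = x ∧ j = y
              · rw [if_neg (fun hc2 : i' = x ∧ j' = y =>
                  hij ⟨hc1.1.trans hc2.1.symm, hc1.2.trans hc2.2.symm⟩), mul_zero]
              · rw [if_neg hc1, zero_mul]
          · have hkneg : ¬(k = l ∧ k' = l') := fun h => hlk' h.2.symm
            rw [if_neg hkneg, ite_self, smul_zero]
            symm
            refine Finset.sum_eq_zero fun x _ => Finset.sum_eq_zero fun y _ => ?_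
            rw [if_neg (fun hc : i' = x ∧ j' = y ∧ l' = k' => hlk' hc.2.2), mul_zero]
        · have hkneg : ¬(k = l ∧ k' = l') := fun h => hlk h.1.symm
          rw [if_neg hkneg, ite_self, smul_zero]
          symm
          refine Finset.sum_eq_zero fun x _ => Finset.sum_eq_zero fun y _ => ?_
          rw [if_neg (fun hc : i = x ∧ j = y ∧ l = k => hlk hc.2.2), zero_mul]
      · -- off-diagonal: α ≠ β
        simp only [Arep, Abar, Matrix.blockDiagonal'_apply_eq, Matrix.kroneckerMap_apply,
          Matrix.map_apply]
        have hLHS : (∑ g : G, ((1 : Matrix (Fin (n α)) (Fin (n α)) ℂ) i i' *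
              (D α g : Matrix (Fin (d α)) (Fin (d α)) ℂ) k k') *
              ((1 : Matrix (Fin (nbar β)) (Fin (nbar β)) ℂ) j j' *
              (starRingEnd ℂ) ((D β g : Matrix (Fin (d β)) (Fin (d β)) ℂ) l l'))) = 0 := by
          by_cases hi : i = i' <;> by_cases hj : j = j' <;>
            simp [Matrix.one_apply, hi, hj, mul_comm, mul_left_comm,
              schur_ne D hnoniso hab k k' l l']
        rw [hLHS, smul_zero]
        symm
        refine Finset.sum_eq_zero fun a _ => ?_
        by_cases ha : a.1 = α
        · rw [Vmat_eq_zero₂ (a := a) (by simpa [ha] using hab), zero_mul]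
        · rw [Vmat_eq_zero₁ (a := a) ha, zero_mul]
    · -- β ≠ β'
      have hL : ∀ g : G, Abar nbar D g ⟨β, (j, l)⟩ ⟨β', (j', l')⟩ = 0 := fun g => by
        rw [Abar]; exact Matrix.blockDiagonal'_apply_ne _ _ _ hβ
      simp only [hL, mul_zero, Finset.sum_const_zero, smul_zero]
      symm
      refine Finset.sum_eq_zero fun a _ => ?_
      by_cases ha : a.1 = β
      · rw [Vmat_eq_zero₂ (a := a) (p := (⟨α, (i', k')⟩, ⟨β', (j', l')⟩))
          (by simpa [ha] using hβ), mul_zero]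
      · rw [Vmat_eq_zero₂ (a := a) ha, zero_mul]
  · -- α ≠ α'
    have hL : ∀ g : G, Arep n D g ⟨α, (i, k)⟩ ⟨α', (i', k')⟩ = 0 := fun g => by
      rw [Arep]; exact Matrix.blockDiagonal'_apply_ne _ _ _ hα
    simp only [hL, zero_mul, Finset.sum_const_zero, smul_zero]
    symm
    refine Finset.sum_eq_zero fun a _ => ?_
    by_cases ha : a.1 = α
    · rw [Vmat_eq_zero₁ (a := a) (p := (⟨α', (i', k')⟩, ⟨β', (j', l')⟩))
        (by simpa [ha] using hα), mul_zero]
    · rw [Vmat_eq_zero₁ (a := a) ha, zero_mul]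
end

lemma sqrt_inv_mul_self' (m : ℕ) :
    ((Real.sqrt m : ℂ))⁻¹ * ((Real.sqrt m : ℂ))⁻¹ = ((m : ℕ) : ℂ)⁻¹ := by
  rw [← mul_inv]
  congr 1
  rw [← Complex.ofReal_mul, Real.mul_self_sqrt (Nat.cast_nonneg _)]
  norm_num

section
variable {I : Type} [Fintype I] [DecidableEq I]
variable {n nbar d : I → ℕ}

lemma Vmul_apply {J : Type} (X : Matrix (BIdx I n d × BIdx I nbar d) J ℂ)
    (a : Σ α : I, Fin (n α) × Fin (nbar α)) (q : J) :
    (Vmat n nbar d * X) a q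
      = ((Real.sqrt (d a.1) : ℂ))⁻¹ * ∑ k : Fin (d a.1), X (pat n nbar d a k) q := by
  rw [Matrix.mul_apply]
  simp only [Vmat, mul_assoc, ← Finset.mul_sum]
  congr 1
  simp only [Finset.sum_mul, ite_mul, zero_mul, one_mul]
  rw [Finset.sum_comm]
  simp only [Finset.sum_ite_eq', Finset.mem_univ, if_true]

lemma mulVh_apply {J : Type} (X : Matrix J (BIdx I n d × BIdx I nbar d) ℂ)
    (p : J) (b : Σ α : I, Fin (n α) × Fin (nbar α)) :
    (X * (Vmat n nbar d)ᴴ) p b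
      = ((Real.sqrt (d b.1) : ℂ))⁻¹ * ∑ k : Fin (d b.1), X p (pat n nbar d b k) := by
  rw [Matrix.mul_apply]
  have : ∀ q, (Vmat n nbar d)ᴴ q b = Vmat n nbar d b q := fun q => by
    rw [Matrix.conjTranspose_apply, RCLike.star_def, conj_Vmat]
  simp only [this, Vmat]
  simp only [mul_comm (X p _), mul_assoc, ← Finset.mul_sum]
  congr 1
  simp only [Finset.sum_mul, ite_mul, zero_mul, one_mul]
  rw [Finset.sum_comm]
  simp only [Finset.sum_ite_eq', Finset.mem_univ, if_true]

lemma VXVh (X : Matrix (BIdx I n d × BIdx I nbar d) (BIdx I n d × BIdx I nbar d) ℂ)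
    (a b : Σ α : I, Fin (n α) × Fin (nbar α)) :
    (Vmat n nbar d * X * (Vmat n nbar d)ᴴ) a b
      = ((Real.sqrt (d a.1) : ℂ))⁻¹ * ((Real.sqrt (d b.1) : ℂ))⁻¹ *
          ∑ k : Fin (d a.1), ∑ k' : Fin (d b.1), X (pat n nbar d a k) (pat n nbar d b k') := by
  rw [mulVh_apply]
  simp only [Vmul_apply, ← Finset.mul_sum]
  rw [Finset.sum_comm]
  try ring

lemma VOVh (hd : ∀ α, 1 ≤ d α) (O : Matrix (BIdx I n d) (BIdx I n d) ℂ) :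
    Vmat n nbar d * (O ⊗ₖ (1 : Matrix (BIdx I nbar d) (BIdx I nbar d) ℂ)) * (Vmat n nbar d)ᴴ
      = Matrix.blockDiagonal' (fun α : I =>
          ((fun i j => (d α : ℂ)⁻¹ * ∑ k : Fin (d α), O ⟨α, (i, k)⟩ ⟨α, (j, k)⟩) :
              Matrix (Fin (n α)) (Fin (n α)) ℂ) ⊗ₖ
            (1 : Matrix (Fin (nbar α)) (Fin (nbar α)) ℂ)) := by
  ext a b
  obtain ⟨α, i, j⟩ := a
  obtain ⟨β, i', j'⟩ := b
  rw [VXVh]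
  simp only [Matrix.kroneckerMap_apply, pat]
  by_cases hab : α = β
  · subst hab
    rw [Matrix.blockDiagonal'_apply_eq]; erw [Matrix.kroneckerMap_apply]
    have h1 : ∀ (k k' : Fin (d α)),
        (1 : Matrix (BIdx I nbar d) (BIdx I nbar d) ℂ) ⟨α, (j, k)⟩ ⟨α, (j', k')⟩
          = if j = j' then (if k = k' then 1 else 0) else 0 := by
      intro k k'
      rw [Matrix.one_apply]
      by_cases hj : j = j' <;> by_cases hk : k = k' <;>
        simp [hj, hk, Sigma.mk.inj_iff, Prod.ext_iff]
    simp only [h1]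
    by_cases hj : j = j'
    · subst hj
      simp only [if_pos rfl, mul_ite, mul_one, mul_zero, Finset.sum_ite_eq, Finset.mem_univ,
        if_true, Matrix.one_apply_eq, mul_one]
      rw [sqrt_inv_mul_self']
    · simp only [if_neg hj, mul_zero, Finset.sum_const_zero, Matrix.one_apply_ne hj]
      try ring
  · rw [Matrix.blockDiagonal'_apply_ne _ _ _ hab]
    have h1 : ∀ (k : Fin (d α)) (k' : Fin (d β)),
        (1 : Matrix (BIdx I nbar d) (BIdx I nbar d) ℂ) ⟨α, (j, k)⟩ ⟨β, (j', k')⟩ = 0 := by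
      intro k k'
      rw [Matrix.one_apply_ne]
      intro hc
      exact hab (congrArg Sigma.fst hc)
    simp only [h1, mul_zero, Finset.sum_const_zero]
    try ring

lemma V1OVh (hd : ∀ α, 1 ≤ d α) (O : Matrix (BIdx I nbar d) (BIdx I nbar d) ℂ) :
    Vmat n nbar d * ((1 : Matrix (BIdx I n d) (BIdx I n d) ℂ) ⊗ₖ O) * (Vmat n nbar d)ᴴ
      = Matrix.blockDiagonal' (fun α : I =>
          (1 : Matrix (Fin (n α)) (Fin (n α)) ℂ) ⊗ₖ
            ((fun i j => (d α : ℂ)⁻¹ * ∑ k : Fin (d α), O ⟨α, (i, k)⟩ ⟨α, (j, k)⟩) :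
              Matrix (Fin (nbar α)) (Fin (nbar α)) ℂ)) := by
  ext a b
  obtain ⟨α, i, j⟩ := a
  obtain ⟨β, i', j'⟩ := b
  rw [VXVh]
  simp only [Matrix.kroneckerMap_apply, pat]
  by_cases hab : α = β
  · subst hab
    rw [Matrix.blockDiagonal'_apply_eq]; erw [Matrix.kroneckerMap_apply]
    have h1 : ∀ (k k' : Fin (d α)),
        (1 : Matrix (BIdx I n d) (BIdx I n d) ℂ) ⟨α, (i, k)⟩ ⟨α, (i', k')⟩
          = if i = i' then (if k = k' then 1 else 0) else 0 := by
      intro k k'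
      rw [Matrix.one_apply]
      by_cases hi : i = i' <;> by_cases hk : k = k' <;>
        simp [hi, hk, Sigma.mk.inj_iff, Prod.ext_iff]
    simp only [h1]
    by_cases hi : i = i'
    · subst hi
      simp only [if_pos rfl, ite_mul, one_mul, zero_mul, Finset.sum_ite_eq, Finset.mem_univ,
        if_true, Matrix.one_apply_eq, one_mul]
      rw [sqrt_inv_mul_self']
    · simp only [if_neg hi, zero_mul, Finset.sum_const_zero, Matrix.one_apply_ne hi]
      try ring
  · rw [Matrix.blockDiagonal'_apply_ne _ _ _ hab]
    have h1 : ∀ (k : Fin (d α)) (k' : Fin (d β)),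
        (1 : Matrix (BIdx I n d) (BIdx I n d) ℂ) ⟨α, (i, k)⟩ ⟨β, (i', k')⟩ = 0 := by
      intro k k'
      rw [Matrix.one_apply_ne]
      intro hc
      exact hab (congrArg Sigma.fst hc)
    simp only [h1, zero_mul, Finset.sum_const_zero]
    try ring
end

section
variable {G I : Type} [Group G] [Fintype G] [Fintype I] [DecidableEq I]
variable {d : I → ℕ} {n nbar : I → ℕ}

lemma UVh_eq_one (U : Matrix (Σ α : I, Fin (n α) × Fin (nbar α)) (BIdx I n d × BIdx I nbar d) ℂ)
    (hU3 : ∀ (α : I) (i : Fin (n α)) (j : Fin (nbar α)),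
      U *ᵥ (((Real.sqrt (d α) : ℂ))⁻¹ •
          ∑ k : Fin (d α),
            eVec ((⟨α, (i, k)⟩ : BIdx I n d), (⟨α, (j, k)⟩ : BIdx I nbar d)))
        = eVec (⟨α, (i, j)⟩ : Σ α : I, Fin (n α) × Fin (nbar α))) :
    U * (Vmat n nbar d)ᴴ = 1 := by
  ext b a
  obtain ⟨α, i, j⟩ := a
  have h := congrFun (hU3 α i j) b
  rw [Matrix.mul_apply]
  have hv : ∀ p, (Vmat n nbar d ⟨α, (i, j)⟩ p)
      = (((Real.sqrt (d α) : ℂ))⁻¹ • ∑ k : Fin (d α),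
          eVec ((⟨α, (i, k)⟩ : BIdx I n d), (⟨α, (j, k)⟩ : BIdx I nbar d))) p := by
    intro p
    simp [Vmat, pat, eVec, Pi.single_apply, Finset.sum_apply]
    left; convert Finset.sum_boole _ _ using 2 with x; exact if_congr Iff.rfl rfl rfl
  have hconj : ∀ p, (Vmat n nbar d)ᴴ p ⟨α, (i, j)⟩ = Vmat n nbar d ⟨α, (i, j)⟩ p := fun p => by
    rw [Matrix.conjTranspose_apply, RCLike.star_def, conj_Vmat]
  calc (∑ p, U b p * (Vmat n nbar d)ᴴ p ⟨α, (i, j)⟩)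
      = ∑ p, U b p * (((Real.sqrt (d α) : ℂ))⁻¹ • ∑ k : Fin (d α),
          eVec ((⟨α, (i, k)⟩ : BIdx I n d), (⟨α, (j, k)⟩ : BIdx I nbar d))) p := by
        refine Finset.sum_congr rfl fun p _ => ?_
        rw [hconj, hv]
    _ = eVec (⟨α, (i, j)⟩ : Σ α : I, Fin (n α) × Fin (nbar α)) b := h
    _ = (1 : Matrix (Σ α : I, Fin (n α) × Fin (nbar α)) (Σ α : I, Fin (n α) × Fin (nbar α)) ℂ)
          b ⟨α, (i, j)⟩ := by
        rw [eVec, Pi.single_apply, Matrix.one_apply]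

variable (D : ∀ α : I, G →* Matrix.unitaryGroup (Fin (d α)) ℂ)

lemma sandwich_simp (U : Matrix (Σ α : I, Fin (n α) × Fin (nbar α)) (BIdx I n d × BIdx I nbar d) ℂ)
    (hU1 : U * Uᴴ = 1) (hU2 : Uᴴ * U = gaugeProj n nbar D)
    (Y : Matrix (BIdx I n d × BIdx I nbar d) (BIdx I n d × BIdx I nbar d) ℂ) :
    U * (gaugeProj n nbar D * Y * gaugeProj n nbar D) * Uᴴ = U * Y * Uᴴ := by
  rw [← hU2]
  calc U * (Uᴴ * U * Y * (Uᴴ * U)) * Uᴴ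
      = (U * Uᴴ) * (U * Y * Uᴴ) * (U * Uᴴ) := by simp only [Matrix.mul_assoc]
    _ = U * Y * Uᴴ := by rw [hU1, Matrix.one_mul, Matrix.mul_one]

lemma U_eq_V (hd : ∀ α, 1 ≤ d α)
    (hirr : ∀ α (W : Submodule ℂ (Fin (d α) → ℂ)),
      (∀ g : G, ∀ x ∈ W, (D α g : Matrix (Fin (d α)) (Fin (d α)) ℂ) *ᵥ x ∈ W) →
      W = ⊥ ∨ W = ⊤)
    (hnoniso : ∀ α β, α ≠ β → ∀ F : Matrix (Fin (d α)) (Fin (d β)) ℂ,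
      (∀ g : G, (D α g : Matrix (Fin (d α)) (Fin (d α)) ℂ) * F
          = F * (D β g : Matrix (Fin (d β)) (Fin (d β)) ℂ)) → F = 0)
    (U : Matrix (Σ α : I, Fin (n α) × Fin (nbar α)) (BIdx I n d × BIdx I nbar d) ℂ)
    (hU1 : U * Uᴴ = 1) (hU2 : Uᴴ * U = gaugeProj n nbar D)
    (hU3 : ∀ (α : I) (i : Fin (n α)) (j : Fin (nbar α)),
      U *ᵥ (((Real.sqrt (d α) : ℂ))⁻¹ •
          ∑ k : Fin (d α),
            eVec ((⟨α, (i, k)⟩ : BIdx I n d), (⟨α, (j, k)⟩ : BIdx I nbar d)))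
        = eVec (⟨α, (i, j)⟩ : Σ α : I, Fin (n α) × Fin (nbar α))) :
    U = Vmat n nbar d := by
  have h1 : U * gaugeProj n nbar D = U := by
    rw [← hU2, ← Matrix.mul_assoc, hU1, Matrix.one_mul]
  calc U = U * gaugeProj n nbar D := h1.symm
    _ = U * ((Vmat n nbar d)ᴴ * Vmat n nbar d) := by rw [gauge_eq D hd hirr hnoniso]
    _ = (U * (Vmat n nbar d)ᴴ) * Vmat n nbar d := by rw [Matrix.mul_assoc]
    _ = Vmat n nbar d := by rw [UVh_eq_one U hU3, Matrix.one_mul]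
end
/-- the unitary `U` from the image of `Π` onto `⊕_α ℂ^{n_α} ⊗ ℂ^{n̄_α}`
(determined by `U ψ_{αij} = e_i^α ⊗ f_j^α`, encoded by `U Uᴴ = 1`, `Uᴴ U = Π` and the
action on the `ψ_{αij}`) conjugates `Ã_r` onto block-diagonal operators `⊕_α M^α ⊗ 1`
with `M^α(O)_{ij} = d_α⁻¹ Σ_k ⟨αik|O|αjk⟩`, every family `M^α` is attained, and it
conjugates `Ã_r̄` onto the operators `⊕_α 1 ⊗ N^α`. -/
theorem stmt5 (G I : Type) [Group G] [Fintype G] [Fintype I] [DecidableEq I]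
    (d : I → ℕ) (hd : ∀ α, 1 ≤ d α)
    (D : ∀ α : I, G →* Matrix.unitaryGroup (Fin (d α)) ℂ)
    (hirr : ∀ α (W : Submodule ℂ (Fin (d α) → ℂ)),
      (∀ g : G, ∀ x ∈ W, (D α g : Matrix (Fin (d α)) (Fin (d α)) ℂ) *ᵥ x ∈ W) →
      W = ⊥ ∨ W = ⊤)
    (hnoniso : ∀ α β, α ≠ β → ∀ F : Matrix (Fin (d α)) (Fin (d β)) ℂ,
      (∀ g : G, (D α g : Matrix (Fin (d α)) (Fin (d α)) ℂ) * F
          = F * (D β g : Matrix (Fin (d β)) (Fin (d β)) ℂ)) → F = 0)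
    (n nbar : I → ℕ)
    (U : Matrix (Σ α : I, Fin (n α) × Fin (nbar α)) (BIdx I n d × BIdx I nbar d) ℂ)
    (hU1 : U * Uᴴ = 1)
    (hU2 : Uᴴ * U = gaugeProj n nbar D)
    (hU3 : ∀ (α : I) (i : Fin (n α)) (j : Fin (nbar α)),
      U *ᵥ (((Real.sqrt (d α) : ℂ))⁻¹ •
          ∑ k : Fin (d α),
            eVec ((⟨α, (i, k)⟩ : BIdx I n d), (⟨α, (j, k)⟩ : BIdx I nbar d)))
        = eVec (⟨α, (i, j)⟩ : Σ α : I, Fin (n α) × Fin (nbar α))) :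
    -- (i) conjugation of Π (O ⊗ 1) Π gives ⊕_α M^α(O) ⊗ 1
    (∀ O : Matrix (BIdx I n d) (BIdx I n d) ℂ,
      U * (gaugeProj n nbar D * (O ⊗ₖ (1 : Matrix (BIdx I nbar d) (BIdx I nbar d) ℂ)) *
          gaugeProj n nbar D) * Uᴴ
        = Matrix.blockDiagonal' (fun α : I =>
            ((fun i j => (d α : ℂ)⁻¹ * ∑ k : Fin (d α), O ⟨α, (i, k)⟩ ⟨α, (j, k)⟩) :
                Matrix (Fin (n α)) (Fin (n α)) ℂ) ⊗ₖ
              (1 : Matrix (Fin (nbar α)) (Fin (nbar α)) ℂ))) ∧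
    -- (ii) every family of matrices M^α is realized by some O
    (∀ M : ∀ α : I, Matrix (Fin (n α)) (Fin (n α)) ℂ,
      ∃ O : Matrix (BIdx I n d) (BIdx I n d) ℂ, ∀ (α : I) (i j : Fin (n α)),
        (d α : ℂ)⁻¹ * ∑ k : Fin (d α), O ⟨α, (i, k)⟩ ⟨α, (j, k)⟩ = M α i j) ∧
    -- (iii) conjugation maps Ã_r̄ onto the operators ⊕_α 1 ⊗ N^α
    ((fun T => U * T * Uᴴ) '' AtildeRbar n nbar D
      = { S | ∃ N : ∀ α : I, Matrix (Fin (nbar α)) (Fin (nbar α)) ℂ,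
          S = Matrix.blockDiagonal' (fun α : I =>
            (1 : Matrix (Fin (n α)) (Fin (n α)) ℂ) ⊗ₖ N α) }) := by
  have hUV : U = Vmat n nbar d := U_eq_V D hd hirr hnoniso U hU1 hU2 hU3
  refine ⟨?_, ?_, ?_⟩
  · intro O
    rw [sandwich_simp D U hU1 hU2, hUV, VOVh hd O]
  · intro M
    refine ⟨Matrix.blockDiagonal' (fun γ : I => M γ ⊗ₖ (1 : Matrix (Fin (d γ)) (Fin (d γ)) ℂ)),
      fun α i j => ?_⟩
    have hdα : ((d α : ℕ) : ℂ) ≠ 0 := by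
      have := hd α
      simp only [ne_eq, Nat.cast_eq_zero]
      omega
    simp only [Matrix.blockDiagonal'_apply_eq, Matrix.kroneckerMap_apply, Matrix.one_apply_eq,
      mul_one, Finset.sum_const, Finset.card_univ, Fintype.card_fin, nsmul_eq_mul]
    field_simp
    try ring
  · ext S
    constructor
    · rintro ⟨T, ⟨O', rfl⟩, rfl⟩
      exact ⟨fun α => fun i j => (d α : ℂ)⁻¹ * ∑ k : Fin (d α), O' ⟨α, (i, k)⟩ ⟨α, (j, k)⟩,
        by dsimp only; rw [sandwich_simp D U hU1 hU2, hUV, V1OVh hd O']⟩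
    · rintro ⟨N, rfl⟩
      refine ⟨gaugeProj n nbar D *
          ((1 : Matrix (BIdx I n d) (BIdx I n d) ℂ) ⊗ₖ
            Matrix.blockDiagonal' (fun γ : I => N γ ⊗ₖ (1 : Matrix (Fin (d γ)) (Fin (d γ)) ℂ))) *
          gaugeProj n nbar D, ⟨_, rfl⟩, ?_⟩
      dsimp only
      rw [sandwich_simp D U hU1 hU2, hUV, V1OVh hd _]
      have hNN : ∀ α : I,
          ((fun i j => (d α : ℂ)⁻¹ * ∑ k : Fin (d α),
              (Matrix.blockDiagonal' (fun γ : I => N γ ⊗ₖ (1 : Matrix (Fin (d γ)) (Fin (d γ)) ℂ)))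
                ⟨α, (i, k)⟩ ⟨α, (j, k)⟩) : Matrix (Fin (nbar α)) (Fin (nbar α)) ℂ) = N α := by
        intro α
        funext i j
        have hdα : ((d α : ℕ) : ℂ) ≠ 0 := by
          have := hd α
          simp only [ne_eq, Nat.cast_eq_zero]
          omega
        simp only [Matrix.blockDiagonal'_apply_eq, Matrix.kroneckerMap_apply, Matrix.one_apply_eq,
          mul_one, Finset.sum_const, Finset.card_univ, Fintype.card_fin, nsmul_eq_mul]
        field_simp
        try ring
      exact congrArg Matrix.blockDiagonal' (funext fun α =>
        congrArg (fun m => Matrix.kroneckerMap (· * ·)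
          (1 : Matrix (Fin (n α)) (Fin (n α)) ℂ) m) (hNN α))
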